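/- (Theorem, Case 2.) Let O₁, O₂ ∈ EuclideanSpace ℝ (Fin 2) with O₁ ≠ O₂, let R₁, R₂ ≥ 0, and let L, d be real numbers with 0 < L < 2·R₁ and d > 0. Consider the set S of pairs (A, C) of points such that: dist A O₁ = R₁, dist C O₂ = R₂, dist A C = d, and A + (L/d) • (C - A) lies on the circle of center O₁ and radius R₁ (i.e. the trajectory entering the first circle at A cuts a chord of length L in it, and C, at distance d from A along the trajectory, is the entrance point of the second circle). Then S is finite and has at most 4 elements. (Given the chord length in the first threat circle, the speed, and the entrance times, there are at most 4 potential trajectories/locations of the bomber.) -/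

import Mathlib

/-- Squared distance in the Euclidean plane, in coordinates. -/
lemma dist_sq_plane (x y : EuclideanSpace ℝ (Fin 2)) :
    dist x y ^ 2 = (x 0 - y 0)^2 + (x 1 - y 1)^2 := by
  rw [EuclideanSpace.dist_eq, Real.sq_sqrt (by positivity), Fin.sum_univ_two,
    Real.dist_eq, Real.dist_eq, sq_abs, sq_abs]

/-- Two circles in the plane with distinct centers meet in at most two points. -/
lemma two_circles (O O' : EuclideanSpace ℝ (Fin 2)) (h : O ≠ O') (r r' : ℝ) :
    ∃ p q : EuclideanSpace ℝ (Fin 2),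
      ∀ x, dist x O = r → dist x O' = r' → x = p ∨ x = q := by
  by_cases hne : ∃ x : EuclideanSpace ℝ (Fin 2), dist x O = r ∧ dist x O' = r'
  · obtain ⟨x₀, hx₀, hx₀'⟩ := hne
    set a : ℝ := O' 0 - O 0 with ha
    set b : ℝ := O' 1 - O 1 with hb
    have hab : a^2 + b^2 ≠ 0 := by
      intro hcon
      apply h
      have h0 : a = 0 := by nlinarith [sq_nonneg a, sq_nonneg b]
      have h1 : b = 0 := by nlinarith [sq_nonneg a, sq_nonneg b]
      ext i
      fin_cases i
      · show O 0 = O' 0; simp [ha] at h0; linarith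
      · show O 1 = O' 1; simp [hb] at h1; linarith
    set u₀ : ℝ := x₀ 0 - O 0 with hu₀
    set v₀ : ℝ := x₀ 1 - O 1 with hv₀
    set t₁ : ℝ := -2 * (b * u₀ - a * v₀) / (a^2 + b^2) with ht₁
    refine ⟨x₀, (WithLp.toLp 2 (fun i : Fin 2 => if i = 0 then x₀ 0 + t₁ * b else x₀ 1 - t₁ * a) :
      EuclideanSpace ℝ (Fin 2)), ?_⟩
    intro x hx hx'
    have e1 : (x 0 - O 0)^2 + (x 1 - O 1)^2 = (x₀ 0 - O 0)^2 + (x₀ 1 - O 1)^2 := by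
      rw [← dist_sq_plane, ← dist_sq_plane, hx, hx₀]
    have e2 : (x 0 - O' 0)^2 + (x 1 - O' 1)^2 = (x₀ 0 - O' 0)^2 + (x₀ 1 - O' 1)^2 := by
      rw [← dist_sq_plane, ← dist_sq_plane, hx', hx₀']
    set u : ℝ := x 0 - O 0 with hu
    set v : ℝ := x 1 - O 1 with hv
    have elin : a * u + b * v = a * u₀ + b * v₀ := by
      linear_combination (e1 - e2) / 2
    set t : ℝ := (b * (u - u₀) - a * (v - v₀)) / (a^2 + b^2) with ht
    have hub : u - u₀ = t * b := by
      rw [ht]; field_simp; linear_combination a * elin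
    have hva : v - v₀ = -t * a := by
      rw [ht]; field_simp; linear_combination b * elin
    have hquad : t * (2 * (b * u₀ - a * v₀) + t * (a^2 + b^2)) = 0 := by
      linear_combination e1 - (u + u₀ + t*b) * hub - (v + v₀ - t*a) * hva
    rcases mul_eq_zero.1 hquad with h0 | h0
    · left
      ext i; fin_cases i
      · show x 0 = x₀ 0
        have : u = u₀ := by rw [h0] at hub; linarith [hub]
        rw [hu, hu₀] at this; linarith
      · show x 1 = x₀ 1
        have : v = v₀ := by rw [h0] at hva; linarith [hva]
        rw [hv, hv₀] at this; linarith
    · right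
      have htt : t = t₁ := by
        rw [ht₁]; field_simp; linear_combination h0
      ext i; fin_cases i
      · show x 0 = if (0 : Fin 2) = 0 then x₀ 0 + t₁ * b else x₀ 1 - t₁ * a
        have : x 0 = x₀ 0 + t * b := by rw [hu, hu₀] at hub; linarith
        rw [this, htt]; simp
      · show x 1 = if (1 : Fin 2) = 0 then x₀ 0 + t₁ * b else x₀ 1 - t₁ * a
        have : x 1 = x₀ 1 - t * a := by rw [hv, hv₀] at hva; linarith
        rw [this, htt]; simp
  · exact ⟨O, O, fun x h1 h2 => absurd ⟨x, h1, h2⟩ hne⟩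

/-- For a pair `(A, C)` as in Case 2, the distance from `C` to the first
center is determined: it equals `√(R₁² - d·L + d²)`. -/
lemma case_two_dist_C (O₁ : EuclideanSpace ℝ (Fin 2))
    (R₁ : ℝ) (L d : ℝ) (hL : 0 < L) (hL2 : L < 2 * R₁) (hd : 0 < d)
    (A C : EuclideanSpace ℝ (Fin 2))
    (w1 : dist A O₁ = R₁) (w3 : dist A C = d)
    (w4 : dist (A + (L / d) • (C - A)) O₁ = R₁) :
    dist C O₁ = Real.sqrt (R₁^2 - d*L + d^2) := by
  have hB : ∀ i : Fin 2, (A + (L / d) • (C - A)) i = A i + (L/d) * (C i - A i) := by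
    intro i
    rfl
  have E1 : (A 0 - O₁ 0)^2 + (A 1 - O₁ 1)^2 = R₁^2 := by
    rw [← dist_sq_plane, w1]
  have E3 : (C 0 - A 0)^2 + (C 1 - A 1)^2 = d^2 := by
    rw [← dist_sq_plane]
    rw [dist_comm] at w3; rw [w3]
  have E4 : (A 0 + (L/d) * (C 0 - A 0) - O₁ 0)^2
      + (A 1 + (L/d) * (C 1 - A 1) - O₁ 1)^2 = R₁^2 := by
    rw [← hB 0, ← hB 1, ← dist_sq_plane, w4]
  set s : ℝ := L / d with hs
  have hsd : s * d = L := by rw [hs]; field_simp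
  have hs0 : s ≠ 0 := by positivity
  set W : ℝ := (A 0 - O₁ 0)*(C 0 - A 0) + (A 1 - O₁ 1)*(C 1 - A 1) with hW
  have key : s * (2*W + s*d^2) = 0 := by
    linear_combination E4 - E1 - s^2 * E3
  have h2 : 2*W + s*d^2 = 0 := by
    rcases mul_eq_zero.1 key with h | h
    · exact absurd h hs0
    · exact h
  have hWval : 2*W = -(L*d) := by
    have : s * d^2 = L * d := by rw [← hsd]; ring
    linarith [h2, this]
  have hsq : (dist C O₁)^2 = R₁^2 - d*L + d^2 := by
    rw [dist_sq_plane]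
    linear_combination E1 + E3 + hWval
  calc dist C O₁ = Real.sqrt ((dist C O₁)^2) := by rw [Real.sqrt_sq dist_nonneg]
    _ = Real.sqrt (R₁^2 - d*L + d^2) := by rw [hsq]

/-- Case 2: knowing the chord length `L` cut by the trajectory in the first
threat circle, and the distance `d` along the trajectory from the first
entrance point `A` to the entrance point `C` of the second threat circle,
there are at most 4 possible pairs `(A, C)`. -/
theorem case_two_at_most_four (O₁ O₂ : EuclideanSpace ℝ (Fin 2)) (hO : O₁ ≠ O₂)
    (R₁ R₂ : ℝ) (hR₁ : 0 ≤ R₁) (hR₂ : 0 ≤ R₂)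
    (L d : ℝ) (hL : 0 < L) (hL2 : L < 2 * R₁) (hd : 0 < d) :
    {AC : EuclideanSpace ℝ (Fin 2) × EuclideanSpace ℝ (Fin 2) |
        dist AC.1 O₁ = R₁ ∧ dist AC.2 O₂ = R₂ ∧ dist AC.1 AC.2 = d ∧
        dist (AC.1 + (L / d) • (AC.2 - AC.1)) O₁ = R₁}.Finite ∧
    {AC : EuclideanSpace ℝ (Fin 2) × EuclideanSpace ℝ (Fin 2) |
        dist AC.1 O₁ = R₁ ∧ dist AC.2 O₂ = R₂ ∧ dist AC.1 AC.2 = d ∧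
        dist (AC.1 + (L / d) • (AC.2 - AC.1)) O₁ = R₁}.ncard ≤ 4 := by
  set ρ : ℝ := Real.sqrt (R₁^2 - d*L + d^2) with hρ
  have hrpos : 0 < R₁^2 - d*L + d^2 := by
    nlinarith [sq_nonneg (2*d - L), mul_pos (sub_pos.2 hL2) (by linarith : (0:ℝ) < 2*R₁ + L)]
  have hρpos : 0 < ρ := Real.sqrt_pos.2 hrpos
  -- at most two possibilities for C
  obtain ⟨c₁, c₂, hc⟩ := two_circles O₁ O₂ hO ρ R₂
  -- for each candidate second point c, at most two possibilities for A
  have aux : ∀ c : EuclideanSpace ℝ (Fin 2), ∃ p q : EuclideanSpace ℝ (Fin 2),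
      ∀ x, dist x O₁ = R₁ → dist x c = d → dist c O₁ = ρ → x = p ∨ x = q := by
    intro c
    by_cases hcO : O₁ = c
    · refine ⟨O₁, O₁, fun x h1 h2 h3 => ?_⟩
      rw [← hcO, dist_self] at h3
      exact absurd h3.symm (ne_of_gt hρpos)
    · obtain ⟨p, q, hpq⟩ := two_circles O₁ c hcO R₁ d
      exact ⟨p, q, fun x h1 h2 _ => hpq x h1 h2⟩
  obtain ⟨a₁, b₁, h1⟩ := aux c₁
  obtain ⟨a₂, b₂, h2⟩ := aux c₂
  have hsub : {AC : EuclideanSpace ℝ (Fin 2) × EuclideanSpace ℝ (Fin 2) |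
        dist AC.1 O₁ = R₁ ∧ dist AC.2 O₂ = R₂ ∧ dist AC.1 AC.2 = d ∧
        dist (AC.1 + (L / d) • (AC.2 - AC.1)) O₁ = R₁} ⊆
      {(a₁, c₁), (b₁, c₁), (a₂, c₂), (b₂, c₂)} := by
    rintro ⟨A, C⟩ ⟨w1, w2, w3, w4⟩
    have hρC : dist C O₁ = ρ := case_two_dist_C O₁ R₁ L d hL hL2 hd A C w1 w3 w4
    rcases hc C hρC w2 with rfl | rfl
    · rcases h1 A w1 w3 hρC with rfl | rfl
      · exact Or.inl rfl
      · exact Or.inr (Or.inl rfl)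
    · rcases h2 A w1 w3 hρC with rfl | rfl
      · exact Or.inr (Or.inr (Or.inl rfl))
      · exact Or.inr (Or.inr (Or.inr rfl))
  have hfin4 : ({(a₁, c₁), (b₁, c₁), (a₂, c₂), (b₂, c₂)} :
      Set (EuclideanSpace ℝ (Fin 2) × EuclideanSpace ℝ (Fin 2))).Finite :=
    (Set.finite_singleton _).insert _ |>.insert _ |>.insert _
  refine ⟨hfin4.subset hsub, ?_⟩
  calc ({AC : EuclideanSpace ℝ (Fin 2) × EuclideanSpace ℝ (Fin 2) |
        dist AC.1 O₁ = R₁ ∧ dist AC.2 O₂ = R₂ ∧ dist AC.1 AC.2 = d ∧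
        dist (AC.1 + (L / d) • (AC.2 - AC.1)) O₁ = R₁}).ncard
      ≤ ({(a₁, c₁), (b₁, c₁), (a₂, c₂), (b₂, c₂)} :
          Set (EuclideanSpace ℝ (Fin 2) × EuclideanSpace ℝ (Fin 2))).ncard :=
        Set.ncard_le_ncard hsub hfin4
    _ ≤ 4 := by
        apply le_trans (Set.ncard_insert_le _ _)
        have h1 := Set.ncard_insert_le (b₁, c₁)
          ({(a₂, c₂), (b₂, c₂)} : Set (EuclideanSpace ℝ (Fin 2) × EuclideanSpace ℝ (Fin 2)))
        have h2 := Set.ncard_insert_le (a₂, c₂)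
          ({(b₂, c₂)} : Set (EuclideanSpace ℝ (Fin 2) × EuclideanSpace ℝ (Fin 2)))
        have h3 := Set.ncard_singleton (b₂, c₂)
        omega
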